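/- Let h be an N×N complex matrix and n ≥ 1. Define the matrix derivative d acting on scalar functions f of h as (d f)(h) = ∑_{a,b} e_{ab} ∂/∂ε f(h + ε e_{ba})|_{ε=0}, extended to n tensor slots d₁,…,dₙ. Then for any z ∈ ℂ, dₙ⋯d₁ applied to w(z) = (det(I − z h))^{-1} equals [∑_{σ ∈ Sₙ} P_σ · ∏_{i=1}^n (z/(I − h^{(i)} z))] · w(z), where P_σ is the permutation operator on (ℂ^N)^{⊗n} and h^{(i)} acts as h in the i-th slot. -/

import Mathlib

open Matrix Finset
open scoped ContDiff

namespace MDW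

attribute [local instance] Matrix.linftyOpNormedRing Matrix.linftyOpNormedAlgebra



variable {n : ℕ}

/-- Permutations supported inside `s`. -/
def Ps (s : Finset (Fin n)) : Finset (Equiv.Perm (Fin n)) :=
  univ.filter fun σ => ∀ x ∉ s, σ x = x

lemma mem_Ps {s : Finset (Fin n)} {σ : Equiv.Perm (Fin n)} :
    σ ∈ Ps s ↔ ∀ x ∉ s, σ x = x := by simp [Ps]

lemma Ps_empty : Ps (∅ : Finset (Fin n)) = {1} := by
  ext σ
  simp [mem_Ps, Equiv.ext_iff]

lemma Ps_univ : Ps (univ : Finset (Fin n)) = univ := by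
  ext σ; simp [mem_Ps]

lemma perm_sum_insert (g : Fin n → Fin n → ℂ) (s : Finset (Fin n)) (k : Fin n) (hk : k ∉ s) :
    ∑ τ ∈ Ps (insert k s), ∏ i ∈ insert k s, g i (τ i)
      = ∑ σ ∈ Ps s, ((∏ i ∈ s, g i (σ i)) * g k k)
        + ∑ σ ∈ Ps s, ∑ j ∈ s, (∏ i ∈ s.erase j, g i (σ i)) * (g j k * g k (σ j)) := by
  have key : ∑ p ∈ (Ps s) ×ˢ (insert k s), ∏ i ∈ insert k s, g i ((p.1 * Equiv.swap p.2 k) i)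
      = ∑ τ ∈ Ps (insert k s), ∏ i ∈ insert k s, g i (τ i) := by
    refine Finset.sum_bij' (fun p _ => p.1 * Equiv.swap p.2 k)
      (fun τ _ => (τ * Equiv.swap (τ⁻¹ k) k, τ⁻¹ k)) ?_ ?_ ?_ ?_ ?_
    · rintro ⟨σ, j⟩ hp
      rw [Finset.mem_product] at hp
      obtain ⟨hσ, hj⟩ := hp
      rw [mem_Ps] at hσ ⊢
      intro x hx
      have hxk : x ≠ k := fun e => hx (e ▸ Finset.mem_insert_self k s)
      have hxs : x ∉ s := fun e => hx (Finset.mem_insert_of_mem e)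
      have hxj : x ≠ j := fun e => hx (e ▸ hj)
      simp [Equiv.Perm.mul_apply, Equiv.swap_apply_of_ne_of_ne hxj hxk, hσ x hxs]
    · intro τ hτ
      rw [mem_Ps] at hτ
      have hmem : τ⁻¹ k ∈ insert k s := by
        by_contra hc
        have := hτ _ hc
        rw [Equiv.Perm.inv_def, Equiv.apply_symm_apply] at this
        exact hc (this ▸ Finset.mem_insert_self k s)
      rw [Finset.mem_product]
      refine ⟨?_, hmem⟩
      rw [mem_Ps]
      intro x hx
      by_cases hxk : x = k
      · subst hxk
        simp [Equiv.Perm.mul_apply, Equiv.swap_apply_right]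
      · have hxi : x ∉ insert k s := by
          simp only [Finset.mem_insert, not_or]; exact ⟨hxk, hx⟩
        have hxinv : x ≠ τ⁻¹ k := by
          intro e
          have := hτ _ hxi
          rw [e, Equiv.Perm.inv_def, Equiv.apply_symm_apply] at this
          exact hxk (e.trans this.symm ▸ rfl)
        simp [Equiv.Perm.mul_apply, Equiv.swap_apply_of_ne_of_ne (show x ≠ τ.symm k from hxinv) hxk, hτ x hxi]
    · rintro ⟨σ, j⟩ hp
      rw [Finset.mem_product] at hp
      obtain ⟨hσ, hj⟩ := hp
      rw [mem_Ps] at hσ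
      have hσk : σ⁻¹ k = k := by
        rw [Equiv.Perm.inv_eq_iff_eq]; exact (hσ k hk).symm
      have hj' : (σ * Equiv.swap j k)⁻¹ k = j := by
        simp [_root_.mul_inv_rev, Equiv.Perm.mul_apply, hσk, Equiv.swap_apply_right]
      refine Prod.ext ?_ hj'
      simp only [hj', mul_assoc, Equiv.swap_mul_self, mul_one]
    · intro τ hτ
      simp only [mul_assoc, Equiv.swap_mul_self, mul_one]
    · rintro ⟨σ, j⟩ _
      rfl
  rw [← key, Finset.sum_product, ← Finset.sum_add_distrib]
  refine Finset.sum_congr rfl ?_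
  intro σ hσ
  rw [mem_Ps] at hσ
  have hσk : σ k = k := hσ k hk
  rw [Finset.sum_insert hk]
  congr 1
  · -- j = k term
    rw [Finset.prod_insert hk]
    have : ∀ i ∈ s, g i ((σ * Equiv.swap k k) i) = g i (σ i) := by
      intro i _; simp
    rw [Finset.prod_congr rfl this]
    simp [Equiv.Perm.mul_apply, hσk, mul_comm]
  · -- j ∈ s terms
    refine Finset.sum_congr rfl ?_
    intro j hj
    have hjk : j ≠ k := fun e => hk (e ▸ hj)
    rw [Finset.prod_insert hk]
    have h1 : g k ((σ * Equiv.swap j k) k) = g k (σ j) := by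
      simp [Equiv.Perm.mul_apply, Equiv.swap_apply_right]
    have h2 : ∏ i ∈ s, g i ((σ * Equiv.swap j k) i)
        = g j k * ∏ i ∈ s.erase j, g i (σ i) := by
      rw [← Finset.mul_prod_erase s _ hj]
      congr 1
      · simp [Equiv.Perm.mul_apply, Equiv.swap_apply_left, hσk]
      · refine Finset.prod_congr rfl ?_
        intro i hi
        have hij : i ≠ j := (Finset.mem_erase.mp hi).1
        have hik : i ≠ k := fun e => hk (e ▸ (Finset.mem_erase.mp hi).2)
        simp [Equiv.Perm.mul_apply, Equiv.swap_apply_of_ne_of_ne hij hik]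
    rw [h1, h2]
    ring


noncomputable section

variable {N n : ℕ} (h : Matrix (Fin N) (Fin N) ℂ) (z : ℂ) (I J : Fin n → Fin N)

def Em (k : Fin n) : Matrix (Fin N) (Fin N) ℂ := Matrix.single (J k) (I k) 1

def Mm (ε : Fin n → ℂ) : Matrix (Fin N) (Fin N) ℂ :=
  1 - z • (h + ∑ i : Fin n, ε i • Em I J i)

def Lc : (Fin n → ℂ) →L[ℂ] Matrix (Fin N) (Fin N) ℂ :=
  ∑ i : Fin n, (ContinuousLinearMap.proj i).smulRight (z • Em I J i)

lemma Lc_apply (v : Fin n → ℂ) : Lc z I J v = ∑ i : Fin n, v i • (z • Em I J i) := by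
  simp [Lc]

lemma Lc_single (k : Fin n) : Lc z I J (Pi.single k 1) = z • Em I J k := by
  rw [Lc_apply, Finset.sum_eq_single k]
  · simp
  · intro i _ hik; simp [Pi.single_apply, hik]
  · simp

lemma Mm_eq (ε : Fin n → ℂ) : Mm h z I J ε = (1 - z • h) - Lc z I J ε := by
  rw [Mm, Lc_apply, smul_add, Finset.smul_sum, sub_sub]
  congr 2
  exact Finset.sum_congr rfl fun i _ => smul_comm _ _ _

lemma hasFDerivAt_Mm (ε : Fin n → ℂ) :
    HasFDerivAt (Mm h z I J) (-(Lc z I J)) ε := by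
  have : Mm h z I J = fun ε => (1 - z • h) - Lc z I J ε := funext (Mm_eq h z I J)
  rw [this]
  have h0 := (hasFDerivAt_const (1 - z • h) ε).sub ((Lc z I J).hasFDerivAt (x := ε))
  exact h0.congr_fderiv (zero_sub _)

def entryCLM (a b : Fin N) : Matrix (Fin N) (Fin N) ℂ →L[ℂ] ℂ :=
  LinearMap.toContinuousLinearMap
    ((LinearMap.proj b).comp ((LinearMap.proj a).comp (Matrix.ofLinearEquiv ℂ).symm.toLinearMap))

@[simp] lemma entryCLM_apply (a b : Fin N) (X : Matrix (Fin N) (Fin N) ℂ) :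
    entryCLM a b X = X a b := rfl

/-- derivative of the determinant of `Mm` -/
def Dd (ε : Fin n → ℂ) : (Fin n → ℂ) →L[ℂ] ℂ :=
  ∑ σ : Equiv.Perm (Fin N), ((Equiv.Perm.sign σ : ℤ) : ℂ) •
    ∑ i : Fin N, (∏ j ∈ univ.erase i, Mm h z I J ε (σ j) j) •
      ((entryCLM (σ i) i).comp (-(Lc z I J)))

lemma hasFDerivAt_detM (ε : Fin n → ℂ) :
    HasFDerivAt (fun ε => (Mm h z I J ε).det) (Dd h z I J ε) ε := by
  have hdet : (fun ε => (Mm h z I J ε).det)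
      = fun ε => ∑ σ : Equiv.Perm (Fin N),
          ((Equiv.Perm.sign σ : ℤ) : ℂ) * ∏ i : Fin N, Mm h z I J ε (σ i) i := by
    funext ε; exact Matrix.det_apply' _
  rw [hdet]
  apply HasFDerivAt.fun_sum
  intro σ _
  have hprod : HasFDerivAt (fun ε => ∏ i : Fin N, Mm h z I J ε (σ i) i)
      (∑ i ∈ (univ : Finset (Fin N)), (∏ j ∈ univ.erase i, Mm h z I J ε (σ j) j) •
        ((entryCLM (σ i) i).comp (-(Lc z I J)))) ε := by
    apply HasFDerivAt.finset_prod
    intro i _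
    exact ((entryCLM (σ i) i).hasFDerivAt).comp ε (hasFDerivAt_Mm h z I J ε)
  simpa [smul_smul] using hprod.const_mul (((Equiv.Perm.sign σ : ℤ) : ℂ))

lemma Dd_single (ε : Fin n → ℂ) (hε : IsUnit (Mm h z I J ε)) (k : Fin n) :
    Dd h z I J ε (Pi.single k 1)
      = -z * ((Mm h z I J ε).det * Ring.inverse (Mm h z I J ε) (I k) (J k)) := by
  classical
  have hdetu : IsUnit (Mm h z I J ε).det := (Matrix.isUnit_iff_isUnit_det _).mp hε
  have hdet0 : (Mm h z I J ε).det ≠ 0 := hdetu.ne_zero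
  set M := Mm h z I J ε with hM
  -- first: evaluate the CLM
  have step1 : Dd h z I J ε (Pi.single k 1)
      = -z * ∑ σ : Equiv.Perm (Fin N), ((Equiv.Perm.sign σ : ℤ) : ℂ) *
          (if σ (I k) = J k then ∏ j ∈ univ.erase (I k), M (σ j) j else 0) := by
    rw [Dd]
    rw [ContinuousLinearMap.sum_apply, Finset.mul_sum]
    refine Finset.sum_congr rfl ?_
    intro σ _
    rw [ContinuousLinearMap.smul_apply, ContinuousLinearMap.sum_apply]
    have hterm : ∀ i : Fin N,
        ((∏ j ∈ univ.erase i, M (σ j) j) • ((entryCLM (σ i) i).comp (-(Lc z I J))))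
          (Pi.single k 1)
        = (∏ j ∈ univ.erase i, M (σ j) j) *
            (-z * (if J k = σ i ∧ I k = i then 1 else 0)) := by
      intro i
      rw [ContinuousLinearMap.smul_apply, ContinuousLinearMap.comp_apply,
        ContinuousLinearMap.neg_apply, Lc_single]
      simp only [entryCLM_apply, Matrix.neg_apply, Matrix.smul_apply, Em,
        Matrix.single, Matrix.of_apply, smul_eq_mul]
      split_ifs <;> ring
    rw [Finset.sum_congr rfl fun i _ => hterm i]
    rw [Finset.sum_eq_single (I k)]
    · by_cases hc : σ (I k) = J k
      · rw [if_pos (⟨hc.symm, rfl⟩ : J k = σ (I k) ∧ I k = I k), if_pos hc]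
        simp only [smul_eq_mul]
        ring
      · rw [if_neg (fun hx : J k = σ (I k) ∧ I k = I k => hc hx.1.symm), if_neg hc]
        simp
    · intro i _ hik
      simp [Ne.symm hik]
    · simp
  rw [step1]
  -- second: recognize the determinant of an updated column
  have step2 : ∑ σ : Equiv.Perm (Fin N), ((Equiv.Perm.sign σ : ℤ) : ℂ) *
        (if σ (I k) = J k then ∏ j ∈ univ.erase (I k), M (σ j) j else 0)
      = (M.updateCol (I k) (Pi.single (J k) 1)).det := by
    rw [Matrix.det_apply']
    refine Finset.sum_congr rfl ?_
    intro σ _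
    congr 1
    rw [← Finset.mul_prod_erase (univ : Finset (Fin N)) _ (Finset.mem_univ (I k))]
    have h1 : (M.updateCol (I k) (Pi.single (J k) 1)) (σ (I k)) (I k)
        = if σ (I k) = J k then 1 else 0 := by
      rw [Matrix.updateCol_apply, if_pos rfl, Pi.single_apply]
    have h2 : ∀ j ∈ univ.erase (I k),
        (M.updateCol (I k) (Pi.single (J k) 1)) (σ j) j = M (σ j) j := by
      intro j hj
      rw [Matrix.updateCol_apply, if_neg (Finset.mem_erase.mp hj).1]
    rw [h1, Finset.prod_congr rfl h2]
    by_cases hc : σ (I k) = J k <;> simp [hc]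
  rw [step2]
  -- third: updated-column determinant is an adjugate entry
  have step3 : (M.updateCol (I k) (Pi.single (J k) 1)).det = M.adjugate (I k) (J k) := by
    rw [← Matrix.det_transpose, ← Matrix.updateRow_transpose]
    rw [← Matrix.adjugate_apply]
    rw [← Matrix.adjugate_transpose]
    rfl
  rw [step3]
  -- fourth: adjugate entry in terms of `Ring.inverse`
  have step4 : M.adjugate (I k) (J k) = M.det * Ring.inverse M (I k) (J k) := by
    have : Ring.inverse M = Ring.inverse M.det • M.adjugate := by
      rw [← Matrix.nonsing_inv_eq_ringInverse, Matrix.inv_def]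
    rw [this]
    simp only [Matrix.smul_apply, smul_eq_mul, Ring.inverse_eq_inv']
    field_simp
  rw [step4]


def Uu : Set (Fin n → ℂ) := {ε | IsUnit (Mm h z I J ε)}
def Rinv (ε : Fin n → ℂ) : Matrix (Fin N) (Fin N) ℂ := Ring.inverse (Mm h z I J ε)
def ww (ε : Fin n → ℂ) : ℂ := ((Mm h z I J ε).det)⁻¹
def aa (ε : Fin n → ℂ) (i j : Fin n) : ℂ := z * Rinv h z I J ε (I i) (J j)

lemma mul_Em_mul (A B : Matrix (Fin N) (Fin N) ℂ) (k : Fin n) (a b : Fin N) :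
    (A * Em I J k * B) a b = A a (J k) * B (I k) b := by
  have h1 : ∀ s, (A * Em I J k) a s = if s = I k then A a (J k) else 0 := by
    intro s
    rw [Matrix.mul_apply]
    rw [Finset.sum_eq_single (J k)]
    · by_cases hs : s = I k
      · subst hs; simp [Em, Matrix.single]
      · have h2 : ¬ I k = s := fun e => hs e.symm
        simp [Em, Matrix.single, h2, hs]
    · intro r _ hr
      have : ¬(J k = r ∧ I k = s) := fun hx => hr hx.1.symm
      simp [Em, Matrix.single, this]
    · simp
  rw [Matrix.mul_apply, Finset.sum_congr rfl fun s _ => by rw [h1 s]]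
  rw [Finset.sum_eq_single (I k)]
  · simp
  · intro r _ hr; simp [hr]
  · simp

lemma isOpen_Uu : IsOpen (Uu h z I J) := by
  have hcont : Continuous fun ε => (Mm h z I J ε).det := by
    rw [continuous_iff_continuousAt]
    exact fun ε => (hasFDerivAt_detM h z I J ε).continuousAt
  have heq : Uu h z I J = (fun ε => (Mm h z I J ε).det) ⁻¹' ({0}ᶜ) := by
    ext ε
    simp [Uu, Matrix.isUnit_iff_isUnit_det, isUnit_iff_ne_zero]
  rw [heq]
  exact isOpen_compl_singleton.preimage hcont

lemma hasFDerivAt_Rinv {ε : Fin n → ℂ} (hε : IsUnit (Mm h z I J ε)) :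
    HasFDerivAt (Rinv h z I J)
      ((ContinuousLinearMap.mulLeftRight ℂ _ (Rinv h z I J ε) (Rinv h z I J ε)).comp
        (Lc z I J)) ε := by
  have h1 := hasFDerivAt_ringInverse (𝕜 := ℂ) hε.unit
  rw [hε.unit_spec] at h1
  have h2 := h1.comp ε (hasFDerivAt_Mm h z I J ε)
  have hco : (↑hε.unit⁻¹ : Matrix (Fin N) (Fin N) ℂ) = Rinv h z I J ε := by
    rw [Rinv]
    conv_rhs => rw [← hε.unit_spec]
    exact (Ring.inverse_unit hε.unit).symm
  have hclm : ((-(ContinuousLinearMap.mulLeftRight ℂ _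
        (↑hε.unit⁻¹ : Matrix (Fin N) (Fin N) ℂ) ↑hε.unit⁻¹)).comp (-(Lc z I J)))
      = (ContinuousLinearMap.mulLeftRight ℂ _ (Rinv h z I J ε) (Rinv h z I J ε)).comp
        (Lc z I J) := by
    rw [hco]
    exact ContinuousLinearMap.ext fun v => by
      change -(ContinuousLinearMap.mulLeftRight ℂ _ (Rinv h z I J ε) (Rinv h z I J ε)
        (-(Lc z I J v))) = ContinuousLinearMap.mulLeftRight ℂ _ (Rinv h z I J ε) (Rinv h z I J ε)
          (Lc z I J v)
      rw [map_neg, neg_neg]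
  rw [hclm] at h2
  exact h2

def Da (ε : Fin n → ℂ) (i j : Fin n) : (Fin n → ℂ) →L[ℂ] ℂ :=
  z • ((entryCLM (I i) (J j)).comp
    ((ContinuousLinearMap.mulLeftRight ℂ _ (Rinv h z I J ε) (Rinv h z I J ε)).comp (Lc z I J)))

lemma hasFDerivAt_aa {ε : Fin n → ℂ} (hε : IsUnit (Mm h z I J ε)) (i j : Fin n) :
    HasFDerivAt (fun ε => aa h z I J ε i j) (Da h z I J ε i j) ε := by
  have h1 := ((entryCLM (I i) (J j)).hasFDerivAt).comp ε (hasFDerivAt_Rinv h z I J hε)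
  have h2 := h1.const_mul z
  exact h2

lemma Da_single {ε : Fin n → ℂ} (i j k : Fin n) :
    Da h z I J ε i j (Pi.single k 1) = aa h z I J ε i k * aa h z I J ε k j := by
  change z • entryCLM (I i) (J j) (ContinuousLinearMap.mulLeftRight ℂ _ (Rinv h z I J ε)
    (Rinv h z I J ε) (Lc z I J (Pi.single k 1))) = _
  rw [Lc_single, ContinuousLinearMap.mulLeftRight_apply,
    entryCLM_apply]
  have : Rinv h z I J ε * z • Em I J k * Rinv h z I J ε
      = z • (Rinv h z I J ε * Em I J k * Rinv h z I J ε) := by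
    rw [Matrix.mul_smul, Matrix.smul_mul]
  rw [this, Matrix.smul_apply, mul_Em_mul]
  simp [aa, smul_eq_mul]
  ring

def Dw (ε : Fin n → ℂ) : (Fin n → ℂ) →L[ℂ] ℂ :=
  (-(ContinuousLinearMap.mulLeftRight ℂ ℂ ((Mm h z I J ε).det)⁻¹
      ((Mm h z I J ε).det)⁻¹)).comp (Dd h z I J ε)

lemma hasFDerivAt_ww {ε : Fin n → ℂ} (hε : IsUnit (Mm h z I J ε)) :
    HasFDerivAt (ww h z I J) (Dw h z I J ε) ε := by
  have hdet0 : (Mm h z I J ε).det ≠ 0 :=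
    ((Matrix.isUnit_iff_isUnit_det _).mp hε).ne_zero
  have h1 := hasFDerivAt_inv' (𝕜 := ℂ) (R := ℂ) hdet0
  exact h1.comp ε (hasFDerivAt_detM h z I J ε)

lemma Dw_single {ε : Fin n → ℂ} (hε : IsUnit (Mm h z I J ε)) (k : Fin n) :
    Dw h z I J ε (Pi.single k 1) = aa h z I J ε k k * ww h z I J ε := by
  have hdet0 : (Mm h z I J ε).det ≠ 0 :=
    ((Matrix.isUnit_iff_isUnit_det _).mp hε).ne_zero
  rw [Dw, ContinuousLinearMap.comp_apply, Dd_single h z I J ε hε k,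
    ContinuousLinearMap.neg_apply, ContinuousLinearMap.mulLeftRight_apply]
  rw [aa, ww, Rinv]
  field_simp

def Ss (s : Finset (Fin n)) (ε : Fin n → ℂ) : ℂ :=
  ∑ σ ∈ Ps s, ∏ i ∈ s, aa h z I J ε i (σ i)

def Ff (s : Finset (Fin n)) (ε : Fin n → ℂ) : ℂ := Ss h z I J s ε * ww h z I J ε

def DS (s : Finset (Fin n)) (ε : Fin n → ℂ) : (Fin n → ℂ) →L[ℂ] ℂ :=
  ∑ σ ∈ Ps s, ∑ j ∈ s, (∏ i ∈ s.erase j, aa h z I J ε i (σ i)) • Da h z I J ε j (σ j)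

def DF (s : Finset (Fin n)) (ε : Fin n → ℂ) : (Fin n → ℂ) →L[ℂ] ℂ :=
  Ss h z I J s ε • Dw h z I J ε + ww h z I J ε • DS h z I J s ε

lemma hasFDerivAt_Ss {ε : Fin n → ℂ} (hε : IsUnit (Mm h z I J ε)) (s : Finset (Fin n)) :
    HasFDerivAt (Ss h z I J s) (DS h z I J s ε) ε := by
  apply HasFDerivAt.fun_sum
  intro σ _
  exact HasFDerivAt.finset_prod fun i _ => hasFDerivAt_aa h z I J hε i (σ i)

lemma hasFDerivAt_Ff {ε : Fin n → ℂ} (hε : IsUnit (Mm h z I J ε)) (s : Finset (Fin n)) :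
    HasFDerivAt (Ff h z I J s) (DF h z I J s ε) ε :=
  (hasFDerivAt_Ss h z I J hε s).mul (hasFDerivAt_ww h z I J hε)

lemma DF_single {ε : Fin n → ℂ} (hε : IsUnit (Mm h z I J ε)) {s : Finset (Fin n)}
    {k : Fin n} (hk : k ∉ s) :
    DF h z I J s ε (Pi.single k 1) = Ff h z I J (insert k s) ε := by
  rw [DF, ContinuousLinearMap.add_apply, ContinuousLinearMap.smul_apply,
    ContinuousLinearMap.smul_apply, Dw_single h z I J hε k]
  have hDS : DS h z I J s ε (Pi.single k 1)
      = ∑ σ ∈ Ps s, ∑ j ∈ s, (∏ i ∈ s.erase j, aa h z I J ε i (σ i)) *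
          (aa h z I J ε j k * aa h z I J ε k (σ j)) := by
    rw [DS, ContinuousLinearMap.sum_apply]
    refine Finset.sum_congr rfl fun σ _ => ?_
    rw [ContinuousLinearMap.sum_apply]
    refine Finset.sum_congr rfl fun j _ => ?_
    rw [ContinuousLinearMap.smul_apply, Da_single]
    simp [smul_eq_mul]
  rw [hDS]
  simp only [Ff, Ss]
  rw [perm_sum_insert (aa h z I J ε) s k hk, ← Finset.sum_mul]
  simp only [smul_eq_mul]
  ring

lemma contDiff_detM : ContDiff ℂ ∞ (fun ε => (Mm h z I J ε).det) := by
  have hrw : (fun ε => (Mm h z I J ε).det)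
      = fun ε => ∑ σ : Equiv.Perm (Fin N),
          ((Equiv.Perm.sign σ : ℤ) : ℂ) * ∏ i : Fin N, Mm h z I J ε (σ i) i := by
    funext ε; exact Matrix.det_apply' _
  rw [hrw]
  apply ContDiff.sum
  intro σ _
  apply ContDiff.mul contDiff_const
  have : ∀ (s : Finset (Fin N)), ContDiff ℂ ∞ (fun ε => ∏ i ∈ s, Mm h z I J ε (σ i) i) := by
    intro s
    induction s using Finset.induction_on with
    | empty => simpa using contDiff_const
    | @insert a s' ha ih =>
      have h1 : ContDiff ℂ ∞ (fun ε => Mm h z I J ε (σ a) a) := by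
        have hMm : ContDiff ℂ ∞ (Mm h z I J) := by
          have : Mm h z I J = fun ε => (1 - z • h) - Lc z I J ε := funext (Mm_eq h z I J)
          rw [this]
          exact contDiff_const.sub (Lc z I J).contDiff
        exact (entryCLM (σ a) a).contDiff.comp hMm
      have h2 : (fun ε => ∏ i ∈ insert a s', Mm h z I J ε (σ i) i)
          = fun ε => Mm h z I J ε (σ a) a * ∏ i ∈ s', Mm h z I J ε (σ i) i := by
        funext ε; exact Finset.prod_insert ha
      rw [h2]
      exact h1.mul ih
  simpa using this univ

lemma contDiffOn_ww : ContDiffOn ℂ ∞ (ww h z I J) (Uu h z I J) :=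
  (contDiff_detM h z I J).contDiffOn.inv fun ε hε =>
    ((Matrix.isUnit_iff_isUnit_det _).mp hε).ne_zero

end

/-- iterated directional derivative along a list of directions -/
noncomputable def dIter' {n : ℕ} : List (Fin n → ℂ) → ((Fin n → ℂ) → ℂ) → (Fin n → ℂ) → ℂ
  | [], f => f
  | a :: t, f => fun x => fderiv ℂ (dIter' t f) x a

@[simp] lemma dIter'_nil {n : ℕ} (f : (Fin n → ℂ) → ℂ) : dIter' [] f = f := by
  simp [dIter']

@[simp] lemma dIter'_cons {n : ℕ} (a : Fin n → ℂ) (t : List (Fin n → ℂ))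
    (f : (Fin n → ℂ) → ℂ) :
    dIter' (a :: t) f = fun x => fderiv ℂ (dIter' t f) x a := by
  simp [dIter']

lemma dIter'_append {n : ℕ} (l : List (Fin n → ℂ)) (a : Fin n → ℂ)
    (f : (Fin n → ℂ) → ℂ) :
    dIter' (l ++ [a]) f = dIter' l (fun x => fderiv ℂ f x a) := by
  induction l with
  | nil => simp
  | cons b t ih => funext x; simp only [List.cons_append, dIter'_cons]; rw [ih]

lemma peel {n : ℕ} {U : Set (Fin n → ℂ)} (hU : IsOpen U) :
    ∀ (m : ℕ) (f : (Fin n → ℂ) → ℂ), ContDiffOn ℂ ∞ f U → ∀ x ∈ U,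
      ∀ v : Fin m → (Fin n → ℂ),
      iteratedFDeriv ℂ m f x v = dIter' (List.ofFn v) f x := by
  intro m
  induction m with
  | zero =>
    intro f _ x _ v
    simp [iteratedFDeriv_zero_apply, List.ofFn_zero]
  | succ m ih =>
    intro f hf x hx v
    have hf' : ContDiffOn ℂ ∞ (fun y => fderiv ℂ f y) U :=
      hf.fderiv_of_isOpen hU (by simp)
    set g := ContinuousLinearMap.apply ℂ ℂ (v (Fin.last m)) with hg
    have hgf : ContDiffOn ℂ ∞ (fun y => fderiv ℂ f y (v (Fin.last m))) U :=
      hf'.continuousLinearMap_comp g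
    have hcomm : iteratedFDeriv ℂ m (fun y => fderiv ℂ f y) x (Fin.init v) (v (Fin.last m))
        = iteratedFDeriv ℂ m (fun y => fderiv ℂ f y (v (Fin.last m))) x (Fin.init v) := by
      have h1 : iteratedFDerivWithin ℂ m (g ∘ fun y => fderiv ℂ f y) U x
          = g.compContinuousMultilinearMap
              (iteratedFDerivWithin ℂ m (fun y => fderiv ℂ f y) U x) :=
        g.iteratedFDerivWithin_comp_left (hf' x hx) hU.uniqueDiffOn hx
          (by exact_mod_cast le_top)
      have h2 := iteratedFDerivWithin_of_isOpen (𝕜 := ℂ)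
        (f := fun y => fderiv ℂ f y) m hU hx
      have h3 := iteratedFDerivWithin_of_isOpen (𝕜 := ℂ)
        (f := g ∘ fun y => fderiv ℂ f y) m hU hx
      have h4 := congrArg (fun (T : ContinuousMultilinearMap ℂ (fun _ : Fin m => (Fin n → ℂ)) ℂ)
          => T (Fin.init v)) (h3.symm.trans (h1.trans (congrArg _ h2)))
      exact h4.symm
    calc iteratedFDeriv ℂ (m + 1) f x v
        = iteratedFDeriv ℂ m (fun y => fderiv ℂ f y) x (Fin.init v) (v (Fin.last m)) :=
          iteratedFDeriv_succ_apply_right v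
      _ = iteratedFDeriv ℂ m (fun y => fderiv ℂ f y (v (Fin.last m))) x (Fin.init v) := hcomm
      _ = dIter' (List.ofFn (Fin.init v)) (fun y => fderiv ℂ f y (v (Fin.last m))) x :=
          ih _ hgf x hx _
      _ = dIter' (List.ofFn (Fin.init v) ++ [v (Fin.last m)]) f x :=
          (congrFun (dIter'_append _ _ _) x).symm
      _ = dIter' (List.ofFn v) f x := by
          congr 1
          rw [List.ofFn_succ', List.concat_eq_append]
          rfl

noncomputable section

variable {N n : ℕ} (h : Matrix (Fin N) (Fin N) ℂ) (z : ℂ) (I J : Fin n → Fin N)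

lemma chain (l : List (Fin n)) (hl : l.Nodup) :
    Set.EqOn (dIter' (l.map fun k => Pi.single k (1 : ℂ)) (ww h z I J))
      (Ff h z I J l.toFinset) (Uu h z I J) := by
  induction l with
  | nil =>
    intro ε _
    show ww h z I J ε = Ff h z I J ∅ ε
    rw [Ff, Ss, Ps_empty]
    simp
  | cons k t ih =>
    intro ε hε
    have hnd := List.nodup_cons.mp hl
    have heq : dIter' ((k :: t).map fun k => Pi.single k (1 : ℂ)) (ww h z I J) ε
        = fderiv ℂ (dIter' (t.map fun k => Pi.single k (1 : ℂ)) (ww h z I J)) ε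
            (Pi.single k 1) := by
      rw [List.map_cons, dIter'_cons]
    have hev : dIter' (t.map fun k => Pi.single k (1 : ℂ)) (ww h z I J)
        =ᶠ[nhds ε] Ff h z I J t.toFinset :=
      Filter.eventuallyEq_of_mem ((isOpen_Uu h z I J).mem_nhds hε) (ih hnd.2)
    rw [heq, hev.fderiv_eq, (hasFDerivAt_Ff h z I J hε t.toFinset).fderiv,
      DF_single h z I J hε (by simpa using hnd.1), List.toFinset_cons]

lemma Mm_zero : Mm h z I J 0 = 1 - z • h := by
  simp [Mm]

lemma zero_mem_Uu (hinv : IsUnit ((1 : Matrix (Fin N) (Fin N) ℂ) - z • h)) :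
    (0 : Fin n → ℂ) ∈ Uu h z I J := by
  show IsUnit (Mm h z I J 0)
  rw [Mm_zero]
  exact hinv

lemma main_aux (hinv : IsUnit ((1 : Matrix (Fin N) (Fin N) ℂ) - z • h)) :
    iteratedFDeriv ℂ n (ww h z I J) 0 (fun i : Fin n => Pi.single i (1 : ℂ))
      = Ff h z I J univ 0 := by
  have h0 := zero_mem_Uu h z I J hinv
  rw [peel (isOpen_Uu h z I J) n _ (contDiffOn_ww h z I J) 0 h0, List.ofFn_eq_map]
  have := chain h z I J (List.finRange n) (List.nodup_finRange n) h0
  rw [List.toFinset_finRange] at this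
  exact this

lemma rhs_entry (hinv : IsUnit ((1 : Matrix (Fin N) (Fin N) ℂ) - z • h))
    (σ : Equiv.Perm (Fin n)) :
    ((Matrix.of fun I' J' : Fin n → Fin N => if I' = J' ∘ σ then (1 : ℂ) else 0) *
      (Matrix.of fun I' J' : Fin n → Fin N =>
        ∏ i : Fin n, (z • ((1 : Matrix (Fin N) (Fin N) ℂ) - z • h)⁻¹) (I' i) (J' i))) I J
      = ∏ i : Fin n, (z • ((1 : Matrix (Fin N) (Fin N) ℂ) - z • h)⁻¹) (I i) (J (σ i)) := by
  set A := z • ((1 : Matrix (Fin N) (Fin N) ℂ) - z • h)⁻¹ with hA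
  rw [Matrix.mul_apply]
  rw [Finset.sum_eq_single (I ∘ ⇑σ⁻¹)]
  · have hcond : I = (I ∘ ⇑σ⁻¹) ∘ ⇑σ := by
      funext i; simp
    rw [Matrix.of_apply, Matrix.of_apply, if_pos hcond, one_mul]
    have : (∏ i : Fin n, A (I i) (J (σ i)))
        = ∏ i : Fin n, A ((I ∘ ⇑σ⁻¹) (σ i)) (J (σ i)) := by
      refine Finset.prod_congr rfl fun i _ => ?_
      simp
    rw [this]
    exact (Equiv.prod_comp σ fun i => A ((I ∘ ⇑σ⁻¹) i) (J i)).symm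
  · intro K _ hK
    rw [Matrix.of_apply, if_neg, zero_mul]
    intro hc
    apply hK
    funext i
    have : I (σ⁻¹ i) = K (σ (σ⁻¹ i)) := congrFun hc (σ⁻¹ i)
    simpa using this.symm
  · simp

end

end MDW

open MDW in
theorem matrix_derivative_of_w
    (N n : ℕ) (h : Matrix (Fin N) (Fin N) ℂ) (z : ℂ)
    (hinv : IsUnit ((1 : Matrix (Fin N) (Fin N) ℂ) - z • h)) :
    (Matrix.of fun I J : Fin n → Fin N =>
        iteratedFDeriv ℂ n
          (fun ε : Fin n → ℂ =>
            (((1 : Matrix (Fin N) (Fin N) ℂ) -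
              z • (h + ∑ i : Fin n,
                ε i • Matrix.single (J i) (I i) (1 : ℂ))).det)⁻¹)
          0 (fun i : Fin n => Pi.single i (1 : ℂ)))
      = (((1 : Matrix (Fin N) (Fin N) ℂ) - z • h).det)⁻¹ •
          ∑ σ : Equiv.Perm (Fin n),
            (Matrix.of fun I J : Fin n → Fin N =>
              if I = J ∘ σ then (1 : ℂ) else 0) *
            (Matrix.of fun I J : Fin n → Fin N =>
              ∏ i : Fin n,
                (z • ((1 : Matrix (Fin N) (Fin N) ℂ) - z • h)⁻¹) (I i) (J i)) := by
  ext I' J'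
  rw [Matrix.of_apply, Matrix.smul_apply, Matrix.sum_apply]
  have e1 : iteratedFDeriv ℂ n
      (fun ε : Fin n → ℂ =>
        (((1 : Matrix (Fin N) (Fin N) ℂ) -
          z • (h + ∑ i : Fin n,
            ε i • Matrix.single (J' i) (I' i) (1 : ℂ))).det)⁻¹)
      0 (fun i : Fin n => Pi.single i (1 : ℂ)) = Ff h z I' J' univ 0 :=
    main_aux h z I' J' hinv
  rw [e1]
  have hsum : ∑ σ : Equiv.Perm (Fin n),
      ((Matrix.of fun I J : Fin n → Fin N => if I = J ∘ σ then (1 : ℂ) else 0) *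
        (Matrix.of fun I J : Fin n → Fin N =>
          ∏ i : Fin n, (z • ((1 : Matrix (Fin N) (Fin N) ℂ) - z • h)⁻¹) (I i) (J i))) I' J'
      = ∑ σ : Equiv.Perm (Fin n),
          ∏ i : Fin n, (z • ((1 : Matrix (Fin N) (Fin N) ℂ) - z • h)⁻¹) (I' i) (J' (σ i)) :=
    Finset.sum_congr rfl fun σ _ => rhs_entry h z I' J' hinv σ
  rw [hsum]
  have haa : ∀ i j : Fin n, aa h z I' J' 0 i j
      = (z • ((1 : Matrix (Fin N) (Fin N) ℂ) - z • h)⁻¹) (I' i) (J' j) := by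
    intro i j
    rw [aa, Rinv, Mm_zero, ← Matrix.nonsing_inv_eq_ringInverse, Matrix.smul_apply]
    simp [smul_eq_mul]
  have hww : ww h z I' J' 0 = (((1 : Matrix (Fin N) (Fin N) ℂ) - z • h).det)⁻¹ := by
    rw [ww, Mm_zero]
  rw [Ff, Ss, Ps_univ, hww]
  rw [Finset.sum_congr rfl fun σ _ => Finset.prod_congr rfl fun i _ => haa i (σ i)]
  rw [smul_eq_mul, mul_comm]
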